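/- Let 𝕏, 𝕐 be normed spaces and F : 𝕏 → 𝕐 a compact linear operator with infinite-dimensional domain 𝕏 (more precisely, assume the unit ball of 𝕏 is not compact). Then for every ϑ⁺ ∈ 𝕏 and every ρ > 0 there exists a sequence {ϑ_k} ⊆ B_ρ(ϑ⁺) with ϑ_k ↛ ϑ⁺ but F(ϑ_k) → F(ϑ⁺). -/

import Mathlib

open Filter

/-- A compact linear operator `F` on a space whose closed unit ball is not compact yields
a (uniformly) locally ill-posed problem: for every `ϑ⁺` and `ρ > 0` there is a sequence
in the closed ball `B_ρ(ϑ⁺)` not converging to `ϑ⁺` whose images converge to `F(ϑ⁺)`. -/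
theorem stmt17 {X Y : Type*} [NormedAddCommGroup X] [NormedSpace ℝ X]
    [NormedAddCommGroup Y] [NormedSpace ℝ Y]
    (F : X →L[ℝ] Y) (hF : IsCompactOperator F)
    (hX : ¬ IsCompact (Metric.closedBall (0 : X) 1))
    (ϑ : X) (ρ : ℝ) (hρ : 0 < ρ) :
    ∃ s : ℕ → X, (∀ k, s k ∈ Metric.closedBall ϑ ρ) ∧
      ¬ Tendsto s atTop (nhds ϑ) ∧
      Tendsto (fun k => F (s k)) atTop (nhds (F ϑ)) := by
  -- X is infinite dimensional
  have hfin : ¬ FiniteDimensional ℝ X := by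
    intro h
    exact hX (ProperSpace.isCompact_closedBall 0 1)
  obtain ⟨R, f, Rgt, fle, lef⟩ := exists_seq_norm_le_one_le_norm_sub hfin
  have hR : (0:ℝ) < R := zero_lt_one.trans Rgt
  -- image of the bounded sequence lies in a compact set
  obtain ⟨K, hK, hKsub⟩ := hF.image_closedBall_subset_compact (𝕜₁ := ℝ) R
  have hmem : ∀ n, F (f n) ∈ K := fun n =>
    hKsub ⟨f n, by simpa [Metric.mem_closedBall, dist_zero_right] using fle n, rfl⟩
  obtain ⟨a, -, φ, hφ, hconv⟩ := hK.tendsto_subseq hmem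
  set ε : ℝ := ρ / (2 * R) with hε
  have hεpos : 0 < ε := div_pos hρ (by linarith)
  refine ⟨fun n => ϑ + ε • (f (φ (n + 1)) - f (φ n)), ?_, ?_, ?_⟩
  · intro k
    have h1 : ‖f (φ (k + 1)) - f (φ k)‖ ≤ 2 * R := by
      calc ‖f (φ (k + 1)) - f (φ k)‖ ≤ ‖f (φ (k + 1))‖ + ‖f (φ k)‖ := norm_sub_le _ _
        _ ≤ R + R := add_le_add (fle _) (fle _)
        _ = 2 * R := by ring
    have : ‖ε • (f (φ (k + 1)) - f (φ k))‖ ≤ ε * (2 * R) := by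
      rw [norm_smul, Real.norm_of_nonneg hεpos.le]
      exact mul_le_mul_of_nonneg_left h1 hεpos.le
    have hεR : ε * (2 * R) = ρ := by rw [hε, div_mul_cancel₀ ρ (mul_pos two_pos hR).ne']
    simpa [Metric.mem_closedBall, dist_eq_norm, hεR] using this
  · intro h
    have hd : Tendsto (fun n => ‖(ϑ + ε • (f (φ (n + 1)) - f (φ n))) - ϑ‖) atTop (nhds 0) := by
      simpa [dist_eq_norm] using (tendsto_iff_dist_tendsto_zero.mp h)
    have hlow : ∀ n, ε ≤ ‖(ϑ + ε • (f (φ (n + 1)) - f (φ n))) - ϑ‖ := by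
      intro n
      have h1 : (1:ℝ) ≤ ‖f (φ (n + 1)) - f (φ n)‖ :=
        lef (Nat.ne_of_gt (hφ (Nat.lt_succ_self n)))
      have : ε * 1 ≤ ε * ‖f (φ (n + 1)) - f (φ n)‖ :=
        mul_le_mul_of_nonneg_left h1 hεpos.le
      simpa [norm_smul, Real.norm_of_nonneg hεpos.le] using this
    have := hd.eventually (eventually_lt_nhds hεpos)
    obtain ⟨n, hn⟩ := this.exists
    exact absurd (hlow n) (not_le.mpr hn)
  · have h1 : Tendsto (fun n => F (f (φ (n + 1)))) atTop (nhds a) :=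
      hconv.comp (tendsto_add_atTop_nat 1)
    have h2 : Tendsto (fun n => F (f (φ (n + 1))) - F (f (φ n))) atTop (nhds (a - a)) :=
      h1.sub hconv
    rw [sub_self] at h2
    have h3 : Tendsto (fun n => F ϑ + ε • (F (f (φ (n + 1))) - F (f (φ n)))) atTop
        (nhds (F ϑ + ε • (0:Y))) := tendsto_const_nhds.add (h2.const_smul ε)
    simpa [map_add, map_smul, map_sub] using h3
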